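/- Let n be a natural number and let α, β be idempotent semigroup endomorphisms of T_n (i.e. α·α = α and β·β = β). Then: (i) the product α·β is idempotent (the idempotents form a band); (ii) if α and β have the same rank, i.e. (Set.range α).ncard = (Set.range β).ncard, then α·β = β (idempotents of equal rank form a right-zero semigroup); and (iii) if moreover n ≥ 5, then α·β·α = β·α (the idempotents form a left regular band). -/

import Mathlib

/-- `s : Fin n → Fin n` is an odd permutation if it is the underlying function of some
permutation of sign `-1`. -/
def IsOddPerm {n : ℕ} (s : Fin n → Fin n) : Prop :=
  ∃ σ : Equiv.Perm (Fin n), Equiv.Perm.sign σ = -1 ∧ ⇑σ = s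

/-- `s : Fin n → Fin n` is an even permutation if it is the underlying function of some
permutation of sign `1`. -/
def IsEvenPerm {n : ℕ} (s : Fin n → Fin n) : Prop :=
  ∃ σ : Equiv.Perm (Fin n), Equiv.Perm.sign σ = 1 ∧ ⇑σ = s

/-- A pair `(t, e)` of elements of `T_n` is permissible if `t ∘ t ∘ t = t` and
`t ∘ e = e ∘ t = e ∘ e = e`. -/
def Permissible {n : ℕ} (t e : Fin n → Fin n) : Prop :=
  t ∘ t ∘ t = t ∧ t ∘ e = e ∧ e ∘ t = e ∧ e ∘ e = e

open Classical in
/-- For a (permissible) pair `(t, e)`, the map `φ_{t,e} : T_n → T_n` sending `s` to `t` if `s`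
is an odd permutation, to `t ∘ t` if `s` is an even permutation, and to `e` if `s` is not
bijective. -/
noncomputable def phi {n : ℕ} (t e : Fin n → Fin n) : (Fin n → Fin n) → (Fin n → Fin n) :=
  fun s => if IsOddPerm s then t else if IsEvenPerm s then t ∘ t else e

/-- `φ : T_n → T_n` is a semigroup endomorphism of `T_n` if `φ (s ∘ s') = φ s ∘ φ s'`
for all `s, s'`. -/
def IsEndo {n : ℕ} (φ : (Fin n → Fin n) → (Fin n → Fin n)) : Prop :=
  ∀ s s' : Fin n → Fin n, φ (s ∘ s') = φ s ∘ φ s'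



open Equiv Equiv.Perm Subgroup

namespace IBand

variable {n : ℕ}

lemma swaps_mem {N : Subgroup (Perm (Fin n))} (hN : N.Normal) {σ : Perm (Fin n)}
    (hσ : σ ∈ N) (b c : Fin n) : swap b c * swap (σ b) (σ c) ∈ N := by
  have key : swap b c * swap (σ b) (σ c) = swap b c * σ * (swap b c)⁻¹ * σ⁻¹ := by
    rw [swap_apply_apply, Equiv.swap_inv]
    simp [mul_assoc]
  rw [key]
  exact N.mul_mem (hN.conj_mem _ hσ _) (N.inv_mem hσ)

lemma exists_notMem_of_card {s : Finset (Fin n)} (h : s.card < n) : ∃ x, x ∉ s := by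
  by_contra hh
  push_neg at hh
  have : (Finset.univ : Finset (Fin n)).card ≤ s.card :=
    Finset.card_le_card (fun x _ => hh x)
  simp at this
  omega

lemma sigma_ne_of_ne {σ : Perm (Fin n)} {a : Fin n} (h : σ a ≠ a) : σ (σ a) ≠ σ a :=
  fun hc => h (σ.injective hc)

/-- a nontrivial normal subgroup contains an element ≠ 1 -/
lemma exists_ne_one_of_ne_bot {N : Subgroup (Perm (Fin n))} (h : N ≠ ⊥) :
    ∃ x ∈ N, x ≠ 1 := by
  by_contra hh
  push_neg at hh
  exact h (by ext x; simp only [Subgroup.mem_bot]; exact ⟨fun hx => hh x hx, by rintro rfl; exact N.one_mem⟩)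

lemma exists_moved {σ : Perm (Fin n)} (h : σ ≠ 1) : ∃ a, σ a ≠ a := by
  by_contra hh
  push_neg at hh
  exact h (Equiv.ext fun x => hh x)

/-- From any nontrivial element of a normal subgroup, get a nontrivial element
    supported on an explicit 4-point set. -/
lemma step1 {N : Subgroup (Perm (Fin n))} (hN : N.Normal) (hn : 4 ≤ n)
    {σ : Perm (Fin n)} (hσ : σ ∈ N) (hσ1 : σ ≠ 1) :
    ∃ γ ∈ N, ∃ b c : Fin n, γ ≠ 1 ∧ γ = swap b c * swap (σ b) (σ c) ∧
      b ≠ c ∧ σ b ≠ b ∧ c ≠ σ b := by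
  obtain ⟨a, ha⟩ := exists_moved hσ1
  set b := σ a with hbdef
  have hb : σ b ≠ b := sigma_ne_of_ne ha
  obtain ⟨c, hc⟩ := exists_notMem_of_card (s := {a, b, σ b}) (by
    calc ({a, b, σ b} : Finset (Fin n)).card ≤ 3 := by
          exact Finset.card_le_three
      _ < n := by omega)
  simp only [Finset.mem_insert, Finset.mem_singleton, not_or] at hc
  obtain ⟨hca, hcb, hcsb⟩ := hc
  refine ⟨swap b c * swap (σ b) (σ c), swaps_mem hN hσ b c, b, c, ?_, rfl, fun h => hcb h.symm, hb, hcsb⟩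
  -- γ ≠ 1
  intro hone
  have hswap : swap b c = swap (σ b) (σ c) := by
    have : swap b c * swap (σ b) (σ c) * swap (σ b) (σ c) = swap (σ b) (σ c) := by
      rw [hone]; group
    simpa [mul_assoc] using this
  -- evaluate at b : c = swap (σ b) (σ c) b
  have hcval : swap (σ b) (σ c) b = c := by
    rw [← hswap, swap_apply_left]
  rcases eq_or_ne b (σ b) with h1 | h1
  · exact hb h1.symm
  rcases eq_or_ne b (σ c) with h2 | h2
  · have h4 : σ b = c := (swap_apply_right (σ b) (σ c)).symm.trans ((congrArg _ h2).symm.trans hcval)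
    exact hcsb h4.symm
  · rw [swap_apply_of_ne_of_ne h1 h2] at hcval
    exact hcb hcval.symm

end IBand

namespace IBand2
open IBand

variable {n : ℕ}

lemma gamma_fix {σ : Perm (Fin n)} {b c x : Fin n}
    (h1 : x ≠ b) (h2 : x ≠ c) (h3 : x ≠ σ b) (h4 : x ≠ σ c) :
    (swap b c * swap (σ b) (σ c)) x = x := by
  rw [Perm.mul_apply, swap_apply_of_ne_of_ne h3 h4, swap_apply_of_ne_of_ne h1 h2]

lemma gamma_maps {σ : Perm (Fin n)} {b c x : Fin n}
    (hx : x = b ∨ x = c ∨ x = σ b ∨ x = σ c) :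
    let γ := swap b c * swap (σ b) (σ c)
    γ x = b ∨ γ x = c ∨ γ x = σ b ∨ γ x = σ c := by
  intro γ
  have key : ∀ y, y = b ∨ y = c ∨ y = σ b ∨ y = σ c →
      (γ y = b ∨ γ y = c ∨ γ y = σ b ∨ γ y = σ c) := by
    intro y hy
    simp only [γ, Perm.mul_apply, swap_apply_def]
    split_ifs <;> tauto
  exact key x hx

/-- For n ≥ 5 every nontrivial normal subgroup contains a three-cycle. -/
lemma three_cycle_mem (hn : 5 ≤ n) {N : Subgroup (Perm (Fin n))} (hN : N.Normal)
    (hbot : N ≠ ⊥) : ∃ t ∈ N, Perm.IsThreeCycle t := by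
  obtain ⟨σ, hσ, hσ1⟩ := exists_ne_one_of_ne_bot hbot
  obtain ⟨γ, hγN, b, c, hγ1, hγeq, _, _, _⟩ := step1 hN (by omega) hσ hσ1
  -- γ is supported on {b, c, σ b, σ c}
  have hfix : ∀ x, x ≠ b → x ≠ c → x ≠ σ b → x ≠ σ c → γ x = x := by
    intro x h1 h2 h3 h4; rw [hγeq]; exact gamma_fix h1 h2 h3 h4
  obtain ⟨a₁, ha₁⟩ := exists_moved hγ1
  have ha₁S : a₁ = b ∨ a₁ = c ∨ a₁ = σ b ∨ a₁ = σ c := by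
    by_contra hh; push_neg at hh
    exact ha₁ (hfix a₁ hh.1 hh.2.1 hh.2.2.1 hh.2.2.2)
  set b₁ := γ a₁ with hb₁def
  have hb₁ : γ b₁ ≠ b₁ := fun hcon => ha₁ (γ.injective hcon)
  have hb₁S : b₁ = b ∨ b₁ = c ∨ b₁ = σ b ∨ b₁ = σ c := by
    rw [hb₁def, hγeq]; exact gamma_maps ha₁S
  have hgb₁S : γ b₁ = b ∨ γ b₁ = c ∨ γ b₁ = σ b ∨ γ b₁ = σ c := by
    rw [hγeq]; exact gamma_maps hb₁S
  obtain ⟨c₁, hc₁⟩ := exists_notMem_of_card (s := {b, c, σ b, σ c}) (by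
    have h4 : ({b, c, σ b, σ c} : Finset (Fin n)).card ≤ 4 := by
      apply le_trans (Finset.card_insert_le _ _)
      have := Finset.card_insert_le c ({σ b, σ c} : Finset (Fin n))
      have := Finset.card_insert_le (σ b) ({σ c} : Finset (Fin n))
      simp only [Finset.card_singleton] at *
      omega
    omega)
  simp only [Finset.mem_insert, Finset.mem_singleton, not_or] at hc₁
  obtain ⟨e1, e2, e3, e4⟩ := hc₁
  have hγc₁ : γ c₁ = c₁ := hfix c₁ e1 e2 e3 e4
  have hc₁b₁ : c₁ ≠ b₁ := by rintro rfl; rcases hb₁S with h|h|h|h <;> [exact e1 h; exact e2 h; exact e3 h; exact e4 h]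
  have hc₁gb₁ : c₁ ≠ γ b₁ := by rintro h; rcases hgb₁S with h'|h'|h'|h' <;> rw [← h] at h' <;> [exact e1 h'; exact e2 h'; exact e3 h'; exact e4 h']
  have hmem : swap b₁ c₁ * swap (γ b₁) (γ c₁) ∈ N := swaps_mem hN hγN b₁ c₁
  rw [hγc₁] at hmem
  refine ⟨_, hmem, ?_⟩
  have : swap b₁ c₁ * swap (γ b₁) c₁ = swap c₁ b₁ * swap c₁ (γ b₁) := by
    rw [swap_comm b₁ c₁, swap_comm (γ b₁) c₁]
  rw [this]
  exact Perm.isThreeCycle_swap_mul_swap_same hc₁b₁ hc₁gb₁ (fun h => hb₁ h.symm)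

end IBand2

namespace IBand3
open IBand IBand2

variable {n : ℕ}

/-- If a normal subgroup contains a three-cycle it contains the alternating group. -/
lemma alt_le_of_three_cycle {N : Subgroup (Perm (Fin n))} (hN : N.Normal)
    {t : Perm (Fin n)} (htN : t ∈ N) (ht : Perm.IsThreeCycle t) :
    alternatingGroup (Fin n) ≤ N := by
  rw [← Equiv.Perm.closure_three_cycles_eq_alternating]
  rw [Subgroup.closure_le]
  intro s hs
  have hconj : IsConj t s := Perm.isConj_of_cycleType_eq (ht.trans hs.symm)
  obtain ⟨g, hg⟩ := isConj_iff.mp hconj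
  rw [← hg]
  exact hN.conj_mem _ htN g

lemma comp_of_alt {N M : Subgroup (Perm (Fin n))}
    (hAN : alternatingGroup (Fin n) ≤ N) (hAM : alternatingGroup (Fin n) ≤ M) :
    N ≤ M ∨ M ≤ N := by
  by_cases h : ∀ y ∈ N, Perm.sign y = 1
  · left
    intro y hy
    exact hAM (Perm.mem_alternatingGroup.mpr (h y hy))
  · right
    push_neg at h
    obtain ⟨x, hxN, hxs⟩ := h
    have hx : Perm.sign x = -1 := (Int.units_eq_one_or _).resolve_left hxs
    intro y hyM
    by_cases hy : Perm.sign y = 1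
    · exact hAN (Perm.mem_alternatingGroup.mpr hy)
    · have hy' : Perm.sign y = -1 := (Int.units_eq_one_or _).resolve_left hy
      have : x⁻¹ * y ∈ N := hAN (Perm.mem_alternatingGroup.mpr (by
        rw [map_mul, map_inv, hx, hy']; rfl))
      have h2 := N.mul_mem hxN this
      rwa [← mul_assoc, mul_inv_cancel, one_mul] at h2

lemma alt_le_5 (hn : 5 ≤ n) {N : Subgroup (Perm (Fin n))} (hN : N.Normal)
    (hbot : N ≠ ⊥) : alternatingGroup (Fin n) ≤ N := by
  obtain ⟨t, htN, ht⟩ := three_cycle_mem hn hN hbot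
  exact alt_le_of_three_cycle hN htN ht

-- n = 3 : any nontrivial normal subgroup contains a 3-cycle (by decide)
lemma dec3 : ∀ x : Perm (Fin 3), x ≠ 1 → ∃ g : Perm (Fin 3),
    ((g * x * g⁻¹) * x).support.card = 3 := by decide

lemma alt_le_3 {N : Subgroup (Perm (Fin 3))} (hN : N.Normal) (hbot : N ≠ ⊥) :
    alternatingGroup (Fin 3) ≤ N := by
  obtain ⟨σ, hσ, hσ1⟩ := exists_ne_one_of_ne_bot hbot
  obtain ⟨g, hg⟩ := dec3 σ hσ1
  have hmem : (g * σ * g⁻¹) * σ ∈ N := N.mul_mem (hN.conj_mem _ hσ g) hσ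
  exact alt_le_of_three_cycle hN hmem (card_support_eq_three_iff.mp hg)

end IBand3

namespace IBand4
open IBand IBand2 IBand3

def d1 : Perm (Fin 4) := swap 0 1 * swap 2 3
def d2 : Perm (Fin 4) := swap 0 2 * swap 1 3
def d3 : Perm (Fin 4) := swap 0 3 * swap 1 2

set_option maxRecDepth 100000 in
lemma dec4a : ∀ x : Perm (Fin 4), x ≠ 1 → ∃ g : Perm (Fin 4),
    (g * x * g⁻¹) * x = d1 ∨ (g * x * g⁻¹) * x = d2 ∨ (g * x * g⁻¹) * x = d3 := by decide

lemma dec4b : ∀ x : Perm (Fin 4), x ≠ 1 → x ≠ d1 → x ≠ d2 → x ≠ d3 →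
    ∃ g : Perm (Fin 4), ((g * x * g⁻¹) * x).support.card = 3 := by decide

lemma dec4c : ∀ x : Perm (Fin 4), (x = d1 ∨ x = d2 ∨ x = d3) →
    ∀ y : Perm (Fin 4), (y = d1 ∨ y = d2 ∨ y = d3) → ∃ g, g * x * g⁻¹ = y := by decide

/-- every nontrivial normal subgroup of S₄ contains the Klein four elements -/
lemma klein_le_4 {N : Subgroup (Perm (Fin 4))} (hN : N.Normal) (hbot : N ≠ ⊥) :
    d1 ∈ N ∧ d2 ∈ N ∧ d3 ∈ N := by
  obtain ⟨σ, hσ, hσ1⟩ := exists_ne_one_of_ne_bot hbot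
  obtain ⟨g, hg⟩ := dec4a σ hσ1
  have hmem : (g * σ * g⁻¹) * σ ∈ N := N.mul_mem (hN.conj_mem _ hσ g) hσ
  have hone : ∃ y ∈ N, y = d1 ∨ y = d2 ∨ y = d3 := ⟨_, hmem, hg⟩
  obtain ⟨y, hyN, hy⟩ := hone
  have get : ∀ z, (z = d1 ∨ z = d2 ∨ z = d3) → z ∈ N := by
    intro z hz
    obtain ⟨g', hg'⟩ := dec4c y hy z hz
    rw [← hg']
    exact hN.conj_mem _ hyN g'
  exact ⟨get d1 (Or.inl rfl), get d2 (Or.inr (Or.inl rfl)), get d3 (Or.inr (Or.inr rfl))⟩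

lemma comp_4 {N M : Subgroup (Perm (Fin 4))} (hN : N.Normal) (hM : M.Normal)
    (hNbot : N ≠ ⊥) (hMbot : M ≠ ⊥) : N ≤ M ∨ M ≤ N := by
  obtain ⟨hd1M, hd2M, hd3M⟩ := klein_le_4 hM hMbot
  obtain ⟨hd1N, hd2N, hd3N⟩ := klein_le_4 hN hNbot
  have key : ∀ K : Subgroup (Perm (Fin 4)), K.Normal →
      (∀ x ∈ K, x = 1 ∨ x = d1 ∨ x = d2 ∨ x = d3) ∨ alternatingGroup (Fin 4) ≤ K := by
    intro K hK
    by_cases h : ∀ x ∈ K, x = 1 ∨ x = d1 ∨ x = d2 ∨ x = d3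
    · exact Or.inl h
    · right
      push_neg at h
      obtain ⟨x, hxK, hx1, hxd1, hxd2, hxd3⟩ := h
      obtain ⟨g, hg⟩ := dec4b x hx1 hxd1 hxd2 hxd3
      exact alt_le_of_three_cycle hK (K.mul_mem (hK.conj_mem _ hxK g) hxK)
        (card_support_eq_three_iff.mp hg)
  rcases key N hN with hNs | hNa
  · left
    intro x hx
    rcases hNs x hx with rfl | rfl | rfl | rfl
    exacts [M.one_mem, hd1M, hd2M, hd3M]
  rcases key M hM with hMs | hMa
  · right
    intro x hx
    rcases hMs x hx with rfl | rfl | rfl | rfl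
    exacts [N.one_mem, hd1N, hd2N, hd3N]
  exact comp_of_alt hNa hMa

lemma dec2 : ∀ x y : Perm (Fin 2), x ≠ 1 → y = 1 ∨ y = x := by decide

lemma comp_2 {N M : Subgroup (Perm (Fin 2))} (hNbot : N ≠ ⊥) : N ≤ M ∨ M ≤ N := by
  right
  obtain ⟨σ, hσ, hσ1⟩ := exists_ne_one_of_ne_bot hNbot
  intro y _
  rcases dec2 σ y hσ1 with rfl | rfl
  exacts [N.one_mem, hσ]

/-- MAIN comparability of nontrivial normal subgroups of Sₙ -/
lemma normal_comparable {n : ℕ} (hn : 2 ≤ n) {N M : Subgroup (Perm (Fin n))}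
    (hN : N.Normal) (hM : M.Normal) (hNbot : N ≠ ⊥) (hMbot : M ≠ ⊥) :
    N ≤ M ∨ M ≤ N := by
  rcases Nat.lt_or_ge n 5 with h5 | h5
  · interval_cases n
    · exact comp_2 hNbot
    · exact comp_of_alt (alt_le_3 hN hNbot) (alt_le_3 hM hMbot)
    · exact comp_4 hN hM hNbot hMbot
  · exact comp_of_alt (alt_le_5 h5 hN hNbot) (alt_le_5 h5 hM hMbot)

end IBand4



open Equiv Equiv.Perm

namespace IBandE

variable {n : ℕ} {φ : (Fin n → Fin n) → (Fin n → Fin n)}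

def fin0 (hn : 2 ≤ n) : Fin n := ⟨0, by omega⟩
def fin1 (hn : 2 ≤ n) : Fin n := ⟨1, by omega⟩

lemma const_collapse (hφ : IsEndo φ) (hni : ¬Function.Injective φ) :
    ∀ z z' : Fin n, φ (fun _ => z) = φ (fun _ => z') := by
  obtain ⟨x, y, hxy, hne⟩ := Function.not_injective_iff.mp hni
  obtain ⟨i, hi⟩ := Function.ne_iff.mp hne
  have step1 : φ (fun _ => x i) = φ (fun _ => y i) := by
    have h1 : φ (x ∘ fun _ => i) = φ x ∘ φ (fun _ => i) := hφ _ _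
    have h2 : φ (y ∘ fun _ => i) = φ y ∘ φ (fun _ => i) := hφ _ _
    have e1 : (x ∘ fun _ : Fin n => i) = fun _ => x i := rfl
    have e2 : (y ∘ fun _ : Fin n => i) = fun _ => y i := rfl
    rw [e1] at h1; rw [e2] at h2
    rw [h1, h2, hxy]
  intro z z'
  set a := x i
  set b := y i
  have hab : a ≠ b := hi
  have key : ∀ w w' : Fin n, φ (fun _ => w) = (φ fun w'' => if w'' = a then w else w') ∘ (φ (fun _ => a)) := by
    intro w w'
    have := hφ (fun w'' => if w'' = a then w else w') (fun _ => a)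
    have e3 : ((fun w'' => if w'' = a then w else w') ∘ fun _ : Fin n => a) = fun _ => w := by
      funext t; simp
    rw [e3] at this
    exact this
  have key2 : ∀ w w' : Fin n, φ (fun _ => w') = (φ fun w'' => if w'' = a then w else w') ∘ (φ (fun _ => b)) := by
    intro w w'
    have := hφ (fun w'' => if w'' = a then w else w') (fun _ => b)
    have e3 : ((fun w'' => if w'' = a then w else w') ∘ fun _ : Fin n => b) = fun _ => w' := by
      funext t; simp [hab.symm]
    rw [e3] at this
    exact this
  rw [key z z', key2 z z', step1]

/-- left absorption: E ∘ φ s = E -/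
lemma absorb_l (hφ : IsEndo φ) {E : Fin n → Fin n}
    (hE : ∀ z, φ (fun _ => z) = E) (v : Fin n) (s : Fin n → Fin n) : E ∘ φ s = E := by
  have := hφ (fun _ => v) s
  have e1 : ((fun _ : Fin n => v) ∘ s) = fun _ => v := rfl
  rw [e1, hE] at this
  exact this.symm

/-- right absorption: φ s ∘ E = E -/
lemma absorb_r (hφ : IsEndo φ) {E : Fin n → Fin n}
    (hE : ∀ z, φ (fun _ => z) = E) (v : Fin n) (s : Fin n → Fin n) : φ s ∘ E = E := by
  have := hφ s (fun _ => v)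
  have e1 : (s ∘ (fun _ : Fin n => v)) = fun _ => s v := rfl
  rw [e1, hE, hE] at this
  exact this.symm

lemma u_absorb_l (hφ : IsEndo φ) (s : Fin n → Fin n) :
    φ ⇑(1 : Perm (Fin n)) ∘ φ s = φ s := by
  have := hφ ⇑(1 : Perm (Fin n)) s
  simpa using this.symm

lemma u_absorb_r (hφ : IsEndo φ) (s : Fin n → Fin n) :
    φ s ∘ φ ⇑(1 : Perm (Fin n)) = φ s := by
  have := hφ s ⇑(1 : Perm (Fin n))
  simpa using this.symm

lemma perm_mul (hφ : IsEndo φ) (σ τ : Perm (Fin n)) :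
    φ ⇑(σ * τ) = φ ⇑σ ∘ φ ⇑τ := by
  have := hφ ⇑σ ⇑τ
  rwa [show ⇑σ ∘ ⇑τ = ⇑(σ * τ) from rfl] at this

lemma inv_u (hφ : IsEndo φ) {σ : Perm (Fin n)} (h : φ ⇑σ = φ ⇑(1 : Perm (Fin n))) :
    φ ⇑σ⁻¹ = φ ⇑(1 : Perm (Fin n)) := by
  calc φ ⇑σ⁻¹ = φ ⇑σ⁻¹ ∘ φ ⇑(1 : Perm (Fin n)) := (u_absorb_r hφ _).symm
    _ = φ ⇑σ⁻¹ ∘ φ ⇑σ := by rw [h]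
    _ = φ ⇑(σ⁻¹ * σ) := (perm_mul hφ _ _).symm
    _ = φ ⇑(1 : Perm (Fin n)) := by rw [inv_mul_cancel]

end IBandE

namespace K

variable {n : ℕ} {φ : (Fin n → Fin n) → (Fin n → Fin n)}
open IBandE

lemma exists_ne_point (hn : 2 ≤ n) (p : Fin n) : ∃ q, q ≠ p := by
  rcases eq_or_ne p ⟨0, by omega⟩ with h | h
  · exact ⟨⟨1, by omega⟩, by rw [h]; simp [Fin.ext_iff]⟩
  · exact ⟨⟨0, by omega⟩, fun hc => h hc.symm⟩

/-- the kernel of a non-injective endomorphism on permutations is nontrivial -/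
lemma ker_nontrivial (hn : 2 ≤ n) (hφ : IsEndo φ) (hni : ¬Function.Injective φ)
    {E : Fin n → Fin n} (hE : ∀ z, φ (fun _ => z) = E) :
    ∃ σ : Perm (Fin n), σ ≠ 1 ∧ φ ⇑σ = φ ⇑(1 : Perm (Fin n)) := by
  by_contra hcon
  push_neg at hcon
  -- φ is injective on permutations
  have hinj : ∀ σ τ : Perm (Fin n), φ ⇑σ = φ ⇑τ → σ = τ := by
    intro σ τ h
    have h1 : φ ⇑(σ * τ⁻¹) = φ ⇑σ ∘ φ ⇑τ⁻¹ := perm_mul hφ _ _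
    have h2 : φ ⇑(τ * τ⁻¹) = φ ⇑τ ∘ φ ⇑τ⁻¹ := perm_mul hφ _ _
    rw [mul_inv_cancel] at h2
    rw [h, ← h2] at h1
    have := hcon (σ * τ⁻¹)
    rcases eq_or_ne (σ * τ⁻¹) 1 with he | he
    · exact mul_inv_eq_one.mp he
    · exact absurd h1 (this he)
  set u := φ ⇑(1 : Perm (Fin n)) with hu
  have huu : u ∘ u = u := by
    have := hφ ⇑(1 : Perm (Fin n)) ⇑(1 : Perm (Fin n))
    simpa [hu] using this.symm
  have hLR : ∀ σ : Perm (Fin n), φ ⇑σ⁻¹ ∘ φ ⇑σ = u := by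
    intro σ
    rw [← perm_mul hφ, inv_mul_cancel]
  have hRL : ∀ σ : Perm (Fin n), φ ⇑σ ∘ φ ⇑σ⁻¹ = u := by
    intro σ
    rw [← perm_mul hφ, mul_inv_cancel]
  by_cases hid : u = id
  · -- image permutations are all functions; get a permutation moving E's range
    have hbij : ∀ σ : Perm (Fin n), Function.Bijective (φ ⇑σ) := by
      intro σ
      constructor
      · intro x y hxy
        have := congrFun (hLR σ) x
        rw [Function.comp_apply, hxy] at this
        have h2 := congrFun (hLR σ) y
        rw [Function.comp_apply] at h2
        rw [hid] at this h2
        simp at this h2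
        rw [← this, h2]
      · intro y
        refine ⟨φ ⇑σ⁻¹ y, ?_⟩
        have := congrFun (hRL σ) y
        rw [hid] at this
        simpa using this
    set F : Perm (Fin n) → Perm (Fin n) := fun σ =>
      Equiv.ofBijective (φ ⇑σ) (hbij σ) with hF
    have hFinj : Function.Injective F := by
      intro σ τ h
      apply hinj
      have : ⇑(F σ) = ⇑(F τ) := by rw [h]
      exact this
    have hFsurj : Function.Surjective F := Finite.injective_iff_surjective.mp hFinj
    set p := E ⟨0, by omega⟩ with hp
    obtain ⟨q, hq⟩ := exists_ne_point hn p
    obtain ⟨σ, hσ⟩ := hFsurj (Equiv.swap p q)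
    have hφσ : φ ⇑σ = ⇑(Equiv.swap p q) := by
      have : ⇑(F σ) = ⇑(Equiv.swap p q) := by rw [hσ]
      exact this
    have habs := congrFun (absorb_r hφ hE ⟨0, by omega⟩ ⇑σ) ⟨0, by omega⟩
    rw [Function.comp_apply, hφσ, ← hp] at habs
    rw [Equiv.swap_apply_left] at habs
    exact hq habs
  · -- u is a non-identity idempotent: range too small
    have hunotinj : ¬Function.Injective u := by
      intro hui
      apply hid
      funext x
      exact hui (congrFun huu x)
    have hunotsurj : ¬Function.Surjective u := fun hs =>
      hunotinj (Finite.injective_iff_surjective.mpr hs)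
    have hex : ∃ y0, ∀ w, u w ≠ y0 := by
      by_contra hc
      push_neg at hc
      exact hunotsurj fun y => hc y
    obtain ⟨y0, hy0⟩ := hex
    set R := Set.range u with hR
    have hRfix : ∀ x : Fin n, x ∈ R → u x = x := by
      rintro x ⟨w, rfl⟩
      exact congrFun huu w
    have hmaps : ∀ (σ : Perm (Fin n)) (x : Fin n), φ ⇑σ x ∈ R := by
      intro σ x
      have := congrFun (u_absorb_l hφ ⇑σ) x
      exact ⟨φ ⇑σ x, this⟩
    have hueq : ∀ (σ : Perm (Fin n)) (x : Fin n), φ ⇑σ x = φ ⇑σ (u x) := by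
      intro σ x
      exact (congrFun (u_absorb_r hφ ⇑σ) x).symm
    classical
    letI : Fintype ↥R := Fintype.ofFinite ↥R
    set f : Perm (Fin n) → (↥R → ↥R) := fun σ a => ⟨φ ⇑σ ↑a, hmaps σ ↑a⟩ with hf
    have hfinj : ∀ σ, Function.Injective (f σ) := by
      intro σ a b hab
      have h1 : φ ⇑σ ↑a = φ ⇑σ ↑b := congrArg Subtype.val hab
      have h2 := congrFun (hLR σ) (a : Fin n)
      have h3 := congrFun (hLR σ) (b : Fin n)
      rw [Function.comp_apply] at h2 h3
      rw [h1] at h2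
      have : (a : Fin n) = b :=
        (hRfix _ a.2).symm.trans ((h2.symm.trans h3).trans (hRfix _ b.2))
      exact Subtype.ext this
    set F : Perm (Fin n) → (↥R ≃ ↥R) := fun σ =>
      Equiv.ofBijective (f σ) (Finite.injective_iff_bijective.mp (hfinj σ)) with hF
    have hFinj : Function.Injective F := by
      intro σ τ h
      apply hinj
      funext x
      have hcoe : f σ = f τ := by
        have : ⇑(F σ) = ⇑(F τ) := by rw [h]
        exact this
      have h1 : φ ⇑σ (u x) = φ ⇑τ (u x) := by
        have := congrFun hcoe ⟨u x, ⟨x, rfl⟩⟩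
        exact congrArg Subtype.val this
      rw [hueq σ x, hueq τ x, h1]
    have hcard := Fintype.card_le_of_injective F hFinj
    have hcard1 : Fintype.card (Perm (Fin n)) = n.factorial := by
      rw [Fintype.card_perm, Fintype.card_fin]
    have hcard2 : Fintype.card (↥R ≃ ↥R) = (Fintype.card ↥R).factorial :=
      Fintype.card_perm
    have hcard3 : Fintype.card ↥R < n := by
      have := Fintype.card_lt_of_injective_of_notMem (Subtype.val : ↥R → Fin n)
        Subtype.val_injective (b := y0) (by
          rw [Subtype.range_coe]
          rintro ⟨w, rfl⟩
          exact hy0 w rfl)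
      simpa using this
    rw [hcard1, hcard2] at hcard
    have h4 : (Fintype.card ↥R).factorial ≤ (n-1).factorial :=
      Nat.factorial_le (by omega)
    have h5 : (n-1).factorial < n.factorial := by
      rw [Nat.factorial_lt (by omega)]
      omega
    omega

end K

namespace L

variable {n : ℕ} {φ : (Fin n → Fin n) → (Fin n → Fin n)}
open IBandE K

lemma pair_perm {a b x y : Fin n} (hab : a ≠ b) (hxy : x ≠ y) :
    ∃ g : Perm (Fin n), g a = x ∧ g b = y := by
  refine ⟨Equiv.swap (Equiv.swap a x b) y * Equiv.swap a x, ?_, ?_⟩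
  · rw [Perm.mul_apply, Equiv.swap_apply_left]
    apply Equiv.swap_apply_of_ne_of_ne _ hxy
    rcases eq_or_ne b x with hbx | hbx
    · rw [hbx, Equiv.swap_apply_right]
      rw [← hbx]
      exact fun h => hab h.symm
    · rw [Equiv.swap_apply_of_ne_of_ne (fun h => hab h.symm) hbx]
      exact fun h => hbx h.symm
  · rw [Perm.mul_apply, Equiv.swap_apply_left]

/-- kernel elements act transitively -/
lemma ker_transitive (hn : 2 ≤ n) (hφ : IsEndo φ) (hni : ¬Function.Injective φ)
    {E : Fin n → Fin n} (hE : ∀ z, φ (fun _ => z) = E) :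
    ∀ p q : Fin n, p ≠ q → ∃ σ : Perm (Fin n),
      φ ⇑σ = φ ⇑(1 : Perm (Fin n)) ∧ σ p = q := by
  obtain ⟨σ₀, hσ₀1, hσ₀⟩ := ker_nontrivial hn hφ hni hE
  have hm : ∃ a, σ₀ a ≠ a := by
    by_contra hc
    push_neg at hc
    exact hσ₀1 (Equiv.ext hc)
  obtain ⟨a, ha⟩ := hm
  intro p q hpq
  obtain ⟨g, hga, hgb⟩ := pair_perm (a := a) (b := σ₀ a) (x := p) (y := q)
    (fun h => ha h.symm) hpq
  refine ⟨g * σ₀ * g⁻¹, ?_, ?_⟩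
  · have h1 : φ ⇑(g * σ₀ * g⁻¹) = φ ⇑g ∘ φ ⇑(σ₀ * g⁻¹) := by
      rw [← perm_mul hφ, mul_assoc]
    rw [perm_mul hφ σ₀ g⁻¹, hσ₀] at h1
    rw [h1, u_absorb_l hφ, ← perm_mul hφ, mul_inv_cancel]
  · have : g⁻¹ p = a := by rw [← hga]; simp
    simp [Perm.mul_apply, this, hgb]

end L

namespace Z

variable {n : ℕ} {φ : (Fin n → Fin n) → (Fin n → Fin n)}
open IBandE K L

/-- the idempotent collapsing a to b -/
def Zeta (a b : Fin n) : Fin n → Fin n := fun x => if x = a then b else x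

lemma Zeta_absorb {a b c : Fin n} (hca : c ≠ a) :
    Zeta a b ∘ Zeta a c = Zeta a c := by
  funext x
  simp only [Zeta, Function.comp_apply]
  split_ifs with h1
  · simp [hca]
  · simp [h1]

lemma Zeta_pull (σ : Perm (Fin n)) (a b : Fin n) :
    Zeta a b = ⇑σ⁻¹ ∘ Zeta (σ a) (σ b) ∘ ⇑σ := by
  funext x
  simp only [Zeta, Function.comp_apply]
  rcases eq_or_ne x a with rfl | hx
  · simp
  · have : σ x ≠ σ a := fun h => hx (σ.injective h)
    simp [hx, this]

/-- main lemma: φ of the basic rank n-1 idempotent equals E -/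
lemma zeta_eq_E (hn : 2 ≤ n) (hφ : IsEndo φ) (hni : ¬Function.Injective φ)
    {E : Fin n → Fin n} (hE : ∀ z, φ (fun _ => z) = E)
    {z0 z1 : Fin n} (hz0v : z0.val = 0) (hz1v : z1.val = 1) :
    φ (Zeta z0 z1) = E := by
  -- partial collapse maps
  set M : ℕ → (Fin n → Fin n) := fun k x => if x.val ≤ k then z1 else x with hM
  have hMbase : M 1 = Zeta z0 z1 := by
    funext x
    simp only [hM, Zeta]
    rcases Nat.lt_or_ge x.val 2 with h | h
    · interval_cases h' : x.val
      · have : x = z0 := by simp [Fin.ext_iff, hz0v, h']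
        simp [this, hz0v]
      · have hxz0 : x ≠ z0 := by simp [Fin.ext_iff, hz0v, h']
        have : x = z1 := by simp [Fin.ext_iff, hz1v, h']
        simp [hxz0, this, h']
    · have h1 : ¬ x.val ≤ 1 := by omega
      have h2 : x ≠ z0 := by simp [Fin.ext_iff, hz0v]; omega
      simp [h1, h2]
  have hMstep : ∀ k (_ : 1 ≤ k) (_ : k + 1 ≤ n - 1),
      M (k+1) = Zeta ⟨k+1, by omega⟩ z1 ∘ M k := by
    intro k hk1 hkn
    funext x
    simp only [hM, Zeta, Function.comp_apply]
    rcases Nat.lt_or_ge x.val (k+1) with h | h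
    · have h1 : x.val ≤ k := by omega
      have h2 : x.val ≤ k + 1 := by omega
      have h3 : z1 ≠ (⟨k+1, by omega⟩ : Fin n) := by simp [Fin.ext_iff, hz1v]; omega
      simp [h1, h2, h3]
    · have h1 : ¬ x.val ≤ k := by omega
      rcases eq_or_ne x.val (k+1) with he | hne
      · have h2 : x.val ≤ k + 1 := by omega
        have h3 : x = (⟨k+1, by omega⟩ : Fin n) := by simp [Fin.ext_iff, he]
        simp [h1, h2, h3]
      · have h2 : ¬ x.val ≤ k + 1 := by omega
        have h3 : x ≠ (⟨k+1, by omega⟩ : Fin n) := by simp [Fin.ext_iff]; omega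
        simp [h1, h2, h3]
  have hMtop : M (n-1) = fun _ => z1 := by
    funext x
    have hlt := x.isLt
    have : x.val ≤ n - 1 := by omega
    simp [hM, this]
  -- induction: φ (M k) = φ (Zeta z0 z1) for 1 ≤ k ≤ n-1
  have hind : ∀ k, 1 ≤ k → k ≤ n - 1 → φ (M k) = φ (Zeta z0 z1) := by
    intro k
    induction k with
    | zero => intro h; omega
    | succ k ih =>
      intro _ hk2
      rcases Nat.eq_or_lt_of_le (show 1 ≤ k + 1 by omega) with he | hlt
      · rw [← he, hMbase]
      · have hk1 : 1 ≤ k := by omega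
        have hkn : k + 1 ≤ n - 1 := hk2
        rw [hMstep k hk1 hkn, hφ]
        rw [ih hk1 (by omega)]
        -- now need φ (Zeta ⟨k+1⟩ z1) ∘ φ (Zeta z0 z1) = φ (Zeta z0 z1)
        set p : Fin n := ⟨k+1, by omega⟩ with hp
        have hpz0 : p ≠ z0 := by simp [Fin.ext_iff, hp, hz0v]
        obtain ⟨σ, hσu, hσp⟩ := ker_transitive hn hφ hni hE p z0 hpz0
        have hb : σ z1 ≠ z0 := by
          rw [← hσp]
          intro h
          have := σ.injective h
          simp [Fin.ext_iff, hz1v, hp] at this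
          omega
        have hpull : Zeta p z1 = ⇑σ⁻¹ ∘ (Zeta z0 (σ z1) ∘ ⇑σ) := by
          have := Zeta_pull σ p z1
          rw [hσp] at this
          exact this
        have hphi : φ (Zeta p z1) = φ (Zeta z0 (σ z1)) := by
          rw [hpull, hφ, hφ, hσu, inv_u hφ hσu, u_absorb_r hφ, u_absorb_l hφ]
        rw [hphi, ← hφ, Zeta_absorb (by simp [Fin.ext_iff, hz1v, hz0v])]
  have := hind (n-1) (by omega) le_rfl
  rw [hMtop] at this
  rw [← this]
  exact hE z1

end Z

namespace L1

variable {n : ℕ} {φ : (Fin n → Fin n) → (Fin n → Fin n)}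
open IBandE K L Z

/-- L1: every non-injective map is sent to E -/
lemma sing_to_E (hn : 2 ≤ n) (hφ : IsEndo φ) (hni : ¬Function.Injective φ)
    {E : Fin n → Fin n} (hE : ∀ z, φ (fun _ => z) = E)
    {s : Fin n → Fin n} (hs : ¬Function.Injective s) : φ s = E := by
  set z0 : Fin n := ⟨0, by omega⟩ with hz0
  set z1 : Fin n := ⟨1, by omega⟩ with hz1
  obtain ⟨p, q, hspq, hpq⟩ := Function.not_injective_iff.mp hs
  have hz01 : z0 ≠ z1 := by simp [Fin.ext_iff, hz0, hz1]
  obtain ⟨σ, hσp, hσq⟩ := pair_perm hpq hz01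
  have hfact : s = (s ∘ ⇑σ⁻¹) ∘ (Zeta z0 z1 ∘ ⇑σ) := by
    funext x
    simp only [Function.comp_apply]
    rcases eq_or_ne (σ x) z0 with h | h
    · have hx : x = p := σ.injective (by rw [h, hσp])
      have hZ : Zeta z0 z1 (σ x) = z1 := by simp only [Zeta]; rw [if_pos h]
      have hq' : σ⁻¹ z1 = q := by rw [← hσq]; simp
      rw [hZ, hq', hx, hspq]
    · have hZ : Zeta z0 z1 (σ x) = σ x := by simp only [Zeta]; rw [if_neg h]
      rw [hZ]
      simp
  rw [hfact, hφ, hφ (Zeta z0 z1) ⇑σ,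
    zeta_eq_E hn hφ hni hE (by simp [hz0]) (by simp [hz1])]
  rw [absorb_l hφ hE z0 ⇑σ]
  rw [absorb_r hφ hE z0 _]

end L1

namespace CL

variable {n : ℕ} {φ : (Fin n → Fin n) → (Fin n → Fin n)}
open IBandE K L Z L1

lemma const_not_inj (hn : 2 ≤ n) (z : Fin n) :
    ¬Function.Injective (fun _ : Fin n => z) := by
  intro h
  have : (⟨0, by omega⟩ : Fin n) = ⟨1, by omega⟩ := h rfl
  simp [Fin.ext_iff] at this

lemma idem_fun_eq_id_of_inj {f : Fin n → Fin n} (hf : f ∘ f = f)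
    (hinj : Function.Injective f) : f = id := by
  funext x
  exact hinj (congrFun hf x)

/-- Classification of idempotent endomorphisms -/
lemma classify (hn : 2 ≤ n) (hφ : IsEndo φ) (hid : ∀ x, φ (φ x) = φ x) :
    φ = id ∨ (∃ f, φ = fun _ => f) ∨
    (∃ (F : Perm (Fin n) →* Perm (Fin n)) (E : Fin n → Fin n),
      (∀ σ : Perm (Fin n), φ ⇑σ = ⇑(F σ)) ∧
      (∀ s, ¬Function.Injective s → φ s = E) ∧
      (∀ σ, F (F σ) = F σ) ∧ F.ker ≠ ⊥ ∧ ¬Function.Injective E) := by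
  by_cases hphiinj : Function.Injective φ
  · left
    funext x
    exact hphiinj (hid x)
  · -- non-injective case
    set E := φ (fun _ => (⟨0, by omega⟩ : Fin n)) with hEdef
    have hE : ∀ z, φ (fun _ => z) = E := fun z => const_collapse hφ hphiinj z _
    have hEE : E ∘ E = E := by
      have := hφ (fun _ => (⟨0, by omega⟩ : Fin n)) (fun _ => (⟨0, by omega⟩ : Fin n))
      rw [hE] at this
      have e1 : ((fun _ : Fin n => (⟨0, by omega⟩ : Fin n)) ∘ fun _ : Fin n => (⟨0, by omega⟩ : Fin n)) = fun _ : Fin n => (⟨0, by omega⟩ : Fin n) := rfl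
      rw [e1, hE] at this
      exact this.symm
    by_cases hEinj : Function.Injective E
    · -- E = id and φ is constantly id
      right; left
      refine ⟨id, ?_⟩
      have hEid : E = id := idem_fun_eq_id_of_inj hEE hEinj
      funext s
      have := absorb_l hφ hE ⟨0, by omega⟩ s
      rw [hEid] at this
      simpa using this
    · -- E is singular
      set u := φ ⇑(1 : Perm (Fin n)) with hu
      have huu : u ∘ u = u := by
        have := hφ ⇑(1 : Perm (Fin n)) ⇑(1 : Perm (Fin n))
        simpa [hu] using this.symm
      by_cases huinj : Function.Injective u
      · -- u = id : permutation type
        right; right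
        have huid : u = id := idem_fun_eq_id_of_inj huu huinj
        have hbij : ∀ σ : Perm (Fin n), Function.Bijective (φ ⇑σ) := by
          intro σ
          have hLR : φ ⇑σ⁻¹ ∘ φ ⇑σ = u := by rw [hu, ← perm_mul hφ, inv_mul_cancel]
          have hRL : φ ⇑σ ∘ φ ⇑σ⁻¹ = u := by rw [hu, ← perm_mul hφ, mul_inv_cancel]
          rw [huid] at hLR hRL
          exact Function.bijective_iff_has_inverse.mpr
            ⟨φ ⇑σ⁻¹, fun x => congrFun hLR x, fun x => congrFun hRL x⟩
        set F0 : Perm (Fin n) → Perm (Fin n) := fun σ =>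
          Equiv.ofBijective (φ ⇑σ) (hbij σ) with hF0
        have hF0coe : ∀ σ, ⇑(F0 σ) = φ ⇑σ := fun σ => rfl
        have hF0mul : ∀ σ τ, F0 (σ * τ) = F0 σ * F0 τ := by
          intro σ τ
          apply Equiv.ext
          intro x
          rw [Perm.mul_apply]
          show φ ⇑(σ * τ) x = φ ⇑σ (φ ⇑τ x)
          have := congrFun (perm_mul hφ σ τ) x
          simpa using this
        set F : Perm (Fin n) →* Perm (Fin n) := MonoidHom.mk' F0 hF0mul with hF
        obtain ⟨σ₀, hσ₀1, hσ₀u⟩ := ker_nontrivial hn hφ hphiinj hE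
        refine ⟨F, E, fun σ => (hF0coe σ).symm, fun s hs => sing_to_E hn hφ hphiinj hE hs, ?_, ?_, hEinj⟩
        · intro σ
          apply Equiv.ext
          intro x
          exact congrFun (hid ⇑σ) x
        · intro hker
          apply hσ₀1
          have : σ₀ ∈ F.ker := by
            rw [MonoidHom.mem_ker]
            apply Equiv.ext
            intro x
            show φ ⇑σ₀ x = x
            have h9 : φ ⇑σ₀ = id := by rw [hσ₀u, ← hu, huid]
            exact congrFun h9 x
          rw [hker] at this
          exact Subgroup.mem_bot.mp this
      · -- u noninjective ⇒ u = E ⇒ φ is constant E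
        right; left
        refine ⟨E, ?_⟩
        have huE : u = E := by
          have h1 : φ u = E := sing_to_E hn hφ hphiinj hE huinj
          have h2 : φ u = u := hid _
          rw [← h1, h2]
        funext s
        have h3 := u_absorb_l hφ s
        rw [← hu, huE] at h3
        have h4 := absorb_l hφ hE ⟨0, by omega⟩ s
        rw [← h3, h4]

end CL

namespace MAIN

variable {n : ℕ} {φ : (Fin n → Fin n) → (Fin n → Fin n)}
open IBandE K L Z L1 CL

lemma hom_comp_eq {F G : Perm (Fin n) →* Perm (Fin n)} (hFidem : ∀ σ, F (F σ) = F σ)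
    (hsub : F.ker ≤ G.ker) : ∀ τ, G (F τ) = G τ := by
  intro τ
  have h1 : F τ * τ⁻¹ ∈ F.ker := by
    rw [MonoidHom.mem_ker, map_mul, map_inv, hFidem, mul_inv_cancel]
  have h2 := hsub h1
  rw [MonoidHom.mem_ker] at h2
  have h3 : G (F τ * τ⁻¹ * τ) = G τ := by rw [map_mul, h2, one_mul]
  rwa [inv_mul_cancel_right] at h3

/-- rank of a PERM-type endomorphism -/
lemma perm_rank (hφ : IsEndo φ)
    {F : Perm (Fin n) →* Perm (Fin n)} {E : Fin n → Fin n}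
    (hcoe : ∀ σ : Perm (Fin n), φ ⇑σ = ⇑(F σ))
    (hsing : ∀ s, ¬Function.Injective s → φ s = E)
    (hEni : ¬Function.Injective E) :
    (Set.range φ).ncard = Nat.card F.range + 1 := by
  classical
  have hrange : Set.range φ =
      insert E ((fun σ : Perm (Fin n) => ⇑σ) '' (F.range : Set (Perm (Fin n)))) := by
    ext y
    constructor
    · rintro ⟨x, rfl⟩
      by_cases hx : Function.Injective x
      · right
        have hbij : Function.Bijective x := ⟨hx, Finite.injective_iff_surjective.mp hx⟩
        refine ⟨F (Equiv.ofBijective x hbij), ⟨_, rfl⟩, ?_⟩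
        exact (hcoe (Equiv.ofBijective x hbij)).symm
      · left
        exact hsing x hx
    · rintro (h | ⟨σ', ⟨τ, rfl⟩, rfl⟩)
      · obtain ⟨p, q, _, hpq⟩ : ∃ p q : Fin n, E p = E q ∧ p ≠ q :=
          Function.not_injective_iff.mp hEni
        refine ⟨fun _ => p, ?_⟩
        rw [h]
        exact hsing _ (fun hinj => hpq (hinj (rfl : (fun _ => p) p = (fun _ => p) q)))
      · exact ⟨⇑τ, hcoe τ⟩
  rw [hrange]
  have hnotmem : E ∉ ((fun σ : Perm (Fin n) => ⇑σ) '' (F.range : Set (Perm (Fin n)))) := by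
    rintro ⟨σ', _, rfl⟩
    exact hEni σ'.injective
  rw [Set.ncard_insert_of_notMem hnotmem]
  rw [Set.ncard_image_of_injective _ (fun σ τ h => Equiv.coe_fn_injective h)]
  rw [← Nat.card_coe_set_eq]
  rfl

lemma card_ker_eq (hn : 2 ≤ n) {F G : Perm (Fin n) →* Perm (Fin n)}
    (h : Nat.card F.range = Nat.card G.range) : Nat.card F.ker = Nat.card G.ker := by
  have h1 := Subgroup.card_eq_card_quotient_mul_card_subgroup F.ker
  have h2 := Subgroup.card_eq_card_quotient_mul_card_subgroup G.ker
  have h3 : Nat.card (Perm (Fin n) ⧸ F.ker) = Nat.card F.range :=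
    Nat.card_congr (QuotientGroup.quotientKerEquivRange F).toEquiv
  have h4 : Nat.card (Perm (Fin n) ⧸ G.ker) = Nat.card G.range :=
    Nat.card_congr (QuotientGroup.quotientKerEquivRange G).toEquiv
  rw [h3] at h1
  rw [h4] at h2
  have hpos : 0 < Nat.card G.range := Nat.card_pos
  have h5 := h1.symm.trans h2
  rw [h] at h5
  exact Nat.eq_of_mul_eq_mul_left hpos h5

lemma ker_eq_of_le_card {K K' : Subgroup (Perm (Fin n))} (hle : K ≤ K')
    (hc : Nat.card K = Nat.card K') : K = K' := by
  apply SetLike.coe_injective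
  apply Set.eq_of_subset_of_ncard_le hle
  rw [← Nat.card_coe_set_eq, ← Nat.card_coe_set_eq]
  rw [show Nat.card (K : Set (Perm (Fin n))) = Nat.card K from rfl,
    show Nat.card (K' : Set (Perm (Fin n))) = Nat.card K' from rfl, hc]

end MAIN
namespace FINAL

variable {n : ℕ}
open Equiv Equiv.Perm IBandE K L Z L1 CL MAIN

lemma main_i (hn : 2 ≤ n) (α β : (Fin n → Fin n) → (Fin n → Fin n))
    (hα : IsEndo α) (hβ : IsEndo β)
    (hαi : ∀ x, α (α x) = α x) (hβi : ∀ x, β (β x) = β x) (x : Fin n → Fin n) :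
    β (α (β (α x))) = β (α x) := by
  rcases classify hn hβ hβi with hidb | ⟨f, hconstb⟩ |
    ⟨Fβ, Eβ, hcoeβ, hsingβ, hidemβ, hkerβ, hEβni⟩
  · rw [hidb]; simp only [id_eq]; exact hαi x
  · rw [hconstb]
  rcases classify hn hα hαi with hida | ⟨f, hconsta⟩ |
    ⟨Fα, Eα, hcoeα, hsingα, hidemα, hkerα, hEαni⟩
  · rw [hida]; simp only [id_eq]; exact hβi x
  · rw [hconsta]
  by_cases hx : Function.Injective x
  · have hbij : Function.Bijective x := ⟨hx, Finite.injective_iff_surjective.mp hx⟩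
    have h1 : α x = ⇑(Fα (Equiv.ofBijective x hbij)) := hcoeα (Equiv.ofBijective x hbij)
    set σx := Equiv.ofBijective x hbij
    rw [h1, hcoeβ, hcoeα, hcoeβ]
    rcases IBand4.normal_comparable hn (MonoidHom.normal_ker Fα) (MonoidHom.normal_ker Fβ)
      hkerα hkerβ with hle | hle
    · rw [hom_comp_eq hidemα hle (Fβ (Fα σx)), hidemβ]
    · rw [hom_comp_eq hidemβ hle (Fα σx), hidemα]
  · rw [hsingα x hx, hsingβ _ hEαni, hsingα _ hEβni, hsingβ _ hEαni]

lemma main_iii (hn : 2 ≤ n) (α β : (Fin n → Fin n) → (Fin n → Fin n))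
    (hα : IsEndo α) (hβ : IsEndo β)
    (hαi : ∀ x, α (α x) = α x) (hβi : ∀ x, β (β x) = β x) (x : Fin n → Fin n) :
    α (β (α x)) = α (β x) := by
  rcases classify hn hα hαi with hida | ⟨f, hconsta⟩ |
    ⟨Fα, Eα, hcoeα, hsingα, hidemα, hkerα, hEαni⟩
  · rw [hida]; simp only [id_eq]
  · rw [hconsta]
  rcases classify hn hβ hβi with hidb | ⟨f, hconstb⟩ |
    ⟨Fβ, Eβ, hcoeβ, hsingβ, hidemβ, hkerβ, hEβni⟩
  · rw [hidb]; simp only [id_eq]; exact hαi x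
  · rw [hconstb]
  by_cases hx : Function.Injective x
  · have hbij : Function.Bijective x := ⟨hx, Finite.injective_iff_surjective.mp hx⟩
    have h1 : α x = ⇑(Fα (Equiv.ofBijective x hbij)) := hcoeα (Equiv.ofBijective x hbij)
    have h2 : β x = ⇑(Fβ (Equiv.ofBijective x hbij)) := hcoeβ (Equiv.ofBijective x hbij)
    set σx := Equiv.ofBijective x hbij
    rw [h1, h2, hcoeβ, hcoeα, hcoeα]
    rcases IBand4.normal_comparable hn (MonoidHom.normal_ker Fα) (MonoidHom.normal_ker Fβ)
      hkerα hkerβ with hle | hle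
    · rw [hom_comp_eq hidemα hle σx]
    · rw [hom_comp_eq hidemβ hle (Fα σx), hidemα]
      rw [hom_comp_eq hidemβ hle σx]
  · rw [hsingα x hx, hsingβ _ hEαni, hsingα _ hEβni, hsingβ x hx, hsingα _ hEβni]

lemma main_ii (hn : 2 ≤ n) (α β : (Fin n → Fin n) → (Fin n → Fin n))
    (hα : IsEndo α) (hβ : IsEndo β)
    (hαi : ∀ x, α (α x) = α x) (hβi : ∀ x, β (β x) = β x)
    (hr : (Set.range α).ncard = (Set.range β).ncard) :
    (fun x => β (α x)) = β := by
  rcases classify hn hβ hβi with hidb | ⟨f, hconstb⟩ |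
    ⟨Fβ, Eβ, hcoeβ, hsingβ, hidemβ, hkerβ, hEβni⟩
  · -- β = id : α must be surjective hence id
    rw [hidb] at hr ⊢
    rw [Set.range_id] at hr
    have huniv : Set.range α = Set.univ :=
      Set.eq_of_subset_of_ncard_le (Set.subset_univ _) (le_of_eq hr.symm)
    have hsurj : Function.Surjective α := Set.range_eq_univ.mp huniv
    have hinj : Function.Injective α := Finite.injective_iff_surjective.mpr hsurj
    funext x
    simp only [id_eq]
    exact hinj (hαi x)
  · rw [hconstb]
  rcases classify hn hα hαi with hida | ⟨f, hconsta⟩ |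
    ⟨Fα, Eα, hcoeα, hsingα, hidemα, hkerα, hEαni⟩
  · rw [hida]; rfl
  · -- α constant : rank contradiction
    exfalso
    haveI : Nonempty (Fin n → Fin n) := ⟨fun i => i⟩
    rw [hconsta] at hr
    rw [Set.range_const, Set.ncard_singleton,
      perm_rank hβ hcoeβ hsingβ hEβni] at hr
    have : 0 < Nat.card Fβ.range := Nat.card_pos
    omega
  · -- both PERM
    have hrk : Nat.card Fα.range = Nat.card Fβ.range := by
      rw [perm_rank hα hcoeα hsingα hEαni, perm_rank hβ hcoeβ hsingβ hEβni] at hr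
      omega
    have hkc : Nat.card Fα.ker = Nat.card Fβ.ker := card_ker_eq hn hrk
    have hkeq : Fα.ker = Fβ.ker := by
      rcases IBand4.normal_comparable hn (MonoidHom.normal_ker Fα) (MonoidHom.normal_ker Fβ)
        hkerα hkerβ with hle | hle
      · exact ker_eq_of_le_card hle hkc
      · exact (ker_eq_of_le_card hle hkc.symm).symm
    funext x
    by_cases hx : Function.Injective x
    · have hbij : Function.Bijective x := ⟨hx, Finite.injective_iff_surjective.mp hx⟩
      have h1 : α x = ⇑(Fα (Equiv.ofBijective x hbij)) := hcoeα (Equiv.ofBijective x hbij)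
      have h2 : β x = ⇑(Fβ (Equiv.ofBijective x hbij)) := hcoeβ (Equiv.ofBijective x hbij)
      rw [h1, h2, hcoeβ]
      rw [hom_comp_eq hidemα (le_of_eq hkeq) (Equiv.ofBijective x hbij)]
    · rw [hsingα x hx, hsingβ _ hEαni, hsingβ x hx]

end FINAL

/-- For idempotent semigroup endomorphisms `α`, `β` of `T_n` (products written
left-to-right, `α·β = fun x => β (α x)`): (i) `α·β` is idempotent; (ii) if `α` and `β` have the
same rank then `α·β = β`; (iii) if `n ≥ 5` then `α·β·α = β·α`. -/
theorem idempotents_band (n : ℕ) (α β : (Fin n → Fin n) → (Fin n → Fin n))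
    (hα : IsEndo α) (hβ : IsEndo β)
    (hαi : (fun x => α (α x)) = α) (hβi : (fun x => β (β x)) = β) :
    ((fun x => β (α (β (α x)))) = fun x => β (α x)) ∧
      ((Set.range α).ncard = (Set.range β).ncard → (fun x => β (α x)) = β) ∧
      (5 ≤ n → (fun x => α (β (α x))) = fun x => α (β x)) := by
  have hαi' : ∀ x, α (α x) = α x := fun x => congrFun hαi x
  have hβi' : ∀ x, β (β x) = β x := fun x => congrFun hβi x
  by_cases hn : 2 ≤ n
  · refine ⟨funext fun x => FINAL.main_i hn α β hα hβ hαi' hβi' x,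
      fun hr => FINAL.main_ii hn α β hα hβ hαi' hβi' hr,
      fun _ => funext fun x => FINAL.main_iii hn α β hα hβ hαi' hβi' x⟩
  · have hT : ∀ f g : Fin n → Fin n, f = g := by
      intro f g
      funext i
      have h1 : n = 0 ∨ n = 1 := by omega
      rcases h1 with rfl | rfl
      · exact absurd i.isLt (by omega)
      · exact Subsingleton.elim _ _
    exact ⟨funext fun x => hT _ _, fun _ => funext fun x => hT _ _,
      fun _ => funext fun x => hT _ _⟩
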